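/- arXiv:2002.03174 — 2 statements merged into one kernel-verified Lean document; each statement's English description precedes it below -/
import Mathlib

section
/- Let n agents have single-peaked value densities with a common slope k > 0, peaks p_1 < p_2 < … < p_n, supports U_i contained in [0,1] (so that normalization forces all peak densities to be equal), and ∫_0^1 v_i = 1 for all i. Then the connected peak-preserving allocation whose cut points are the midpoints c_i = (p_i + p_{i+1})/2 for i = 1,…,n−1 (agent i receiving (c_{i−1}, c_i] with c_0 = 0, c_n = 1) maximizes the sum of agents' utilities Σ_i V_i(X_i) over all allocations; in particular it is Pareto optimal. -/
open MeasureTheory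

noncomputable def pieceVal (v : ℝ → ℝ) (P : Set ℝ) : ℝ := ∫ x in P, v x

def IsAlloc {n : ℕ} (X : Fin n → Set ℝ) : Prop :=
  (∀ i, MeasurableSet (X i)) ∧ (∀ i j, i ≠ j → X i ∩ X j = ∅) ∧
    (⋃ i, X i) = Set.Icc (0:ℝ) 1

def Dominates {n : ℕ} (v : Fin n → ℝ → ℝ) (Y X : Fin n → Set ℝ) : Prop :=
  (∀ i, pieceVal (v i) (X i) ≤ pieceVal (v i) (Y i)) ∧
    ∃ i, pieceVal (v i) (X i) < pieceVal (v i) (Y i)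

def ParetoOpt {n : ℕ} (v : Fin n → ℝ → ℝ) (X : Fin n → Set ℝ) : Prop :=
  ¬ ∃ Y, IsAlloc Y ∧ Dominates v Y X

def Supp01 (v : ℝ → ℝ) : Set ℝ := {x ∈ Set.Icc (0:ℝ) 1 | 0 < v x}

def SinglePeakedD (v : ℝ → ℝ) (p k : ℝ) : Prop :=
  0 < k ∧ p ∈ Set.Icc (0:ℝ) 1 ∧
    (∀ x ∈ Set.Icc (0:ℝ) 1, v x = max 0 (v p - k * |x - p|)) ∧
    (∫ x in Set.Icc (0:ℝ) 1, v x) = 1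

def NonWasteful {n : ℕ} (v : Fin n → ℝ → ℝ) (X : Fin n → Set ℝ) : Prop :=
  ∀ i, volume (X i \ Supp01 (v i)) = 0

def ConnPeakPres {n : ℕ} (p : Fin n → ℝ) (X : Fin n → Set ℝ) : Prop :=
  ∃ (c : Fin (n+1) → ℝ) (σ : Equiv.Perm (Fin n)),
    Monotone c ∧ c 0 = 0 ∧ c (Fin.last n) = 1 ∧
    StrictMono (fun i => p (σ i)) ∧
    ∀ i : Fin n, X (σ i) =ᵐ[volume] Set.Ioc (c i.castSucc) (c i.succ)

def EnvyFreeA {n : ℕ} (v : Fin n → ℝ → ℝ) (X : Fin n → Set ℝ) : Prop :=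
  ∀ i j, pieceVal (v i) (X j) ≤ pieceVal (v i) (X i)


lemma triCont (v : ℝ → ℝ) (H p k : ℝ) (h : ∀ x, v x = max 0 (H - k * |x - p|)) :
    Continuous v := by
  have : v = fun x => max 0 (H - k * |x - p|) := funext h
  rw [this]
  fun_prop

lemma height (v : ℝ → ℝ) (p k : ℝ) (hk : 0 < k)
    (hsp : ∀ x, v x = max 0 (v p - k * |x - p|))
    (hsupp : {x : ℝ | 0 < v x} ⊆ Set.Icc (0:ℝ) 1)
    (hnorm : (∫ x in Set.Icc (0:ℝ) 1, v x) = 1) :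
    v p = Real.sqrt k ∧ p ∈ Set.Icc (0:ℝ) 1 := by
  set H := v p with hHdef
  have hH : 0 < H := by
    by_contra h
    push_neg at h
    have hz : ∀ x, v x = 0 := by
      intro x
      rw [hsp x]
      have h1 : H - k * |x - p| ≤ 0 := by nlinarith [abs_nonneg (x - p)]
      exact max_eq_left h1
    have : (∫ x in Set.Icc (0:ℝ) 1, v x) = 0 := by simp [hz]
    rw [this] at hnorm; norm_num at hnorm
  have hcont : Continuous v := triCont v H p k hsp
  set a := p - H / k with ha
  set b := p + H / k with hb
  have hab : a < b := by
    have : 0 < H / k := div_pos hH hk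
    simp only [ha, hb]; linarith
  have hIoo : Set.Ioo a b ⊆ Set.Icc (0:ℝ) 1 := by
    intro x hx
    apply hsupp
    show 0 < v x
    rw [hsp x]
    have h1 : |x - p| < H / k := by
      rw [abs_lt]; constructor <;> [skip; skip] <;>
        · simp only [ha, hb] at hx; cases hx with | intro h1 h2 => linarith
    have h2 : k * |x - p| < H := by
      calc k * |x - p| < k * (H / k) := by exact mul_lt_mul_of_pos_left h1 hk
        _ = H := by field_simp
    exact lt_max_iff.2 (Or.inr (by linarith))
  have hsub : Set.Icc a b ⊆ Set.Icc (0:ℝ) 1 := by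
    rw [← closure_Ioo hab.ne]
    exact closure_minimal hIoo isClosed_Icc
  have ha0 : 0 ≤ a := (hsub (Set.left_mem_Icc.2 hab.le)).1
  have hb1 : b ≤ 1 := (hsub (Set.right_mem_Icc.2 hab.le)).2
  have hap : a ≤ p := by simp only [ha]; nlinarith [div_pos hH hk]
  have hpb : p ≤ b := by simp only [hb]; nlinarith [div_pos hH hk]
  have hint : ∀ c d : ℝ, IntervalIntegrable v volume c d := fun c d =>
    hcont.intervalIntegrable c d
  have h01 : ∫ x in (0:ℝ)..1, v x = 1 := by
    rw [intervalIntegral.integral_of_le (by norm_num : (0:ℝ) ≤ 1),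
      ← MeasureTheory.integral_Icc_eq_integral_Ioc]
    exact hnorm
  have h0a : ∫ x in (0:ℝ)..a, v x = 0 := by
    rw [intervalIntegral.integral_congr (g := fun _ => 0), intervalIntegral.integral_zero]
    intro x hx
    rw [Set.uIcc_of_le ha0] at hx
    rw [hsp x]
    have hxp : x ≤ p := le_trans hx.2 hap
    have : |x - p| = p - x := by rw [abs_of_nonpos (by linarith)]; ring
    have hka : H / k ≤ p - x := by
      have := hx.2; simp only [ha] at this; linarith
    have : H - k * |x - p| ≤ 0 := by
      rw [this]
      have : H ≤ k * (p - x) := by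
        calc H = k * (H / k) := by field_simp
          _ ≤ k * (p - x) := mul_le_mul_of_nonneg_left hka hk.le
      linarith
    exact max_eq_left this
  have hb1' : ∫ x in b..1, v x = 0 := by
    rw [intervalIntegral.integral_congr (g := fun _ => 0), intervalIntegral.integral_zero]
    intro x hx
    rw [Set.uIcc_of_le hb1] at hx
    rw [hsp x]
    have hxp : p ≤ x := le_trans hpb hx.1
    have habs : |x - p| = x - p := abs_of_nonneg (by linarith)
    have hka : H / k ≤ x - p := by
      have := hx.1; simp only [hb] at this; linarith
    have : H - k * |x - p| ≤ 0 := by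
      rw [habs]
      have : H ≤ k * (x - p) := by
        calc H = k * (H / k) := by field_simp
          _ ≤ k * (x - p) := mul_le_mul_of_nonneg_left hka hk.le
      linarith
    exact max_eq_left this
  have hFap : ∫ x in a..p, v x = (H * p - k * (p * p - p ^ 2 / 2)) -
      (H * a - k * (p * a - a ^ 2 / 2)) := by
    have hcg : ∫ x in a..p, v x = ∫ x in a..p, (H - k * (p - x)) := by
      apply intervalIntegral.integral_congr
      intro x hx
      rw [Set.uIcc_of_le hap] at hx
      rw [hsp x]
      have habs : |x - p| = p - x := by rw [abs_of_nonpos (by linarith [hx.2])]; ring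
      rw [habs]
      apply max_eq_right
      have h3 : p - x ≤ H / k := by
        have := hx.1; simp only [ha] at this; linarith
      have : k * (p - x) ≤ H := by
        calc k * (p - x) ≤ k * (H / k) := mul_le_mul_of_nonneg_left h3 hk.le
          _ = H := by field_simp
      linarith
    rw [hcg]
    apply intervalIntegral.integral_eq_sub_of_hasDerivAt
      (f := fun x : ℝ => H * x - k * (p * x - x ^ 2 / 2))
    · intro x _
      have h1 : HasDerivAt (fun x : ℝ => x) 1 x := hasDerivAt_id x
      have h2 : HasDerivAt (fun x : ℝ => x ^ 2) (2 * x) x := by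
        simpa using hasDerivAt_pow 2 x
      have := ((h1.const_mul H).sub (((h1.const_mul p).sub (h2.div_const 2)).const_mul k))
      convert this using 1
      · funext y; simp only [Pi.sub_apply]
      · ring
    · exact (Continuous.intervalIntegrable (by fun_prop) a p)
  have hFpb : ∫ x in p..b, v x = (H * b - k * (b ^ 2 / 2 - p * b)) -
      (H * p - k * (p ^ 2 / 2 - p * p)) := by
    have hcg : ∫ x in p..b, v x = ∫ x in p..b, (H - k * (x - p)) := by
      apply intervalIntegral.integral_congr
      intro x hx
      rw [Set.uIcc_of_le hpb] at hx
      rw [hsp x]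
      have habs : |x - p| = x - p := abs_of_nonneg (by linarith [hx.1])
      rw [habs]
      apply max_eq_right
      have h3 : x - p ≤ H / k := by
        have := hx.2; simp only [hb] at this; linarith
      have : k * (x - p) ≤ H := by
        calc k * (x - p) ≤ k * (H / k) := mul_le_mul_of_nonneg_left h3 hk.le
          _ = H := by field_simp
      linarith
    rw [hcg]
    apply intervalIntegral.integral_eq_sub_of_hasDerivAt
      (f := fun x : ℝ => H * x - k * (x ^ 2 / 2 - p * x))
    · intro x _
      have h1 : HasDerivAt (fun x : ℝ => x) 1 x := hasDerivAt_id x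
      have h2 : HasDerivAt (fun x : ℝ => x ^ 2) (2 * x) x := by
        simpa using hasDerivAt_pow 2 x
      have := ((h1.const_mul H).sub (((h2.div_const 2).sub (h1.const_mul p)).const_mul k))
      convert this using 1
      · funext y; simp only [Pi.sub_apply]
      · ring
    · exact (Continuous.intervalIntegrable (by fun_prop) p b)
  have hsplit : ∫ x in (0:ℝ)..1, v x =
      (∫ x in (0:ℝ)..a, v x) + (∫ x in a..p, v x) + (∫ x in p..b, v x) +
        (∫ x in b..1, v x) := by
    rw [intervalIntegral.integral_add_adjacent_intervals (hint 0 a) (hint a p),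
      intervalIntegral.integral_add_adjacent_intervals (hint 0 p) (hint p b),
      intervalIntegral.integral_add_adjacent_intervals (hint 0 b) (hint b 1)]
  rw [h01, h0a, hb1', hFap, hFpb] at hsplit
  have hHk : H ^ 2 = k := by
    have hk' : k ≠ 0 := ne_of_gt hk
    set d := H / k with hdd
    have hd : k * d = H := by rw [hdd]; field_simp
    simp only [ha, hb, ← hdd] at hsplit
    linear_combination (k * d - H) * hd - k * hsplit
  constructor
  · rw [← Real.sqrt_sq hH.le, hHk]
  · exact hsupp (show 0 < v p from hH)

lemma splitInt {n : ℕ} (f : ℝ → ℝ) (hf : Continuous f) (Z : Fin n → Set ℝ)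
    (hZm : ∀ i, MeasurableSet (Z i)) (hZd : ∀ i j, i ≠ j → Z i ∩ Z j = ∅)
    (hZu : (⋃ i, Z i) = Set.Icc (0:ℝ) 1) (S : Set ℝ) (hS : MeasurableSet S)
    (hS1 : S ⊆ Set.Icc (0:ℝ) 1) :
    ∫ x in S, f x = ∑ j, ∫ x in S ∩ Z j, f x := by
  have hSU : S = ⋃ j, S ∩ Z j := by
    rw [← Set.inter_iUnion, hZu, Set.inter_eq_left.2 hS1]
  have hpd : Pairwise (Function.onFun Disjoint fun j => S ∩ Z j) := by
    intro i j hij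
    apply Set.disjoint_iff_inter_eq_empty.2
    apply Set.eq_empty_of_subset_empty
    calc (S ∩ Z i) ∩ (S ∩ Z j) ⊆ Z i ∩ Z j := by
          intro x hx; exact ⟨hx.1.2, hx.2.2⟩
      _ = ∅ := hZd i j hij
  have hint : IntegrableOn f (⋃ j, S ∩ Z j) volume := by
    rw [← hSU]; exact (hf.integrableOn_Icc).mono_set hS1
  conv_lhs => rw [hSU]
  rw [MeasureTheory.integral_iUnion (fun j => hS.inter (hZm j)) hpd hint]
  exact tsum_fintype _

/-- The connected peak-preserving allocation cutting at midpoints of consecutive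
peaks maximizes the sum of utilities over all allocations and is Pareto optimal
(common slope, full triangular supports inside [0,1], sorted peaks). -/
theorem statement10 {n : ℕ} (hn : 0 < n) (v : Fin n → ℝ → ℝ) (p : Fin n → ℝ) (k : ℝ)
    (hk : 0 < k)
    (hsp : ∀ i, ∀ x : ℝ, v i x = max 0 (v i (p i) - k * |x - p i|))
    (hsupp : ∀ i, {x : ℝ | 0 < v i x} ⊆ Set.Icc (0:ℝ) 1)
    (hnorm : ∀ i, (∫ x in Set.Icc (0:ℝ) 1, v i x) = 1)
    (hsorted : StrictMono p)
    (cut : ℕ → ℝ) (hcut0 : cut 0 = 0) (hcutn : cut n = 1)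
    (hcutmid : ∀ m (h1 : 0 < m) (h2 : m < n),
      cut m = (p ⟨m - 1, by omega⟩ + p ⟨m, h2⟩) / 2)
    (X : Fin n → Set ℝ)
    (hXdef : ∀ i : Fin n, X i =
      if (i : ℕ) = 0 then Set.Icc (cut 0) (cut 1)
      else Set.Ioc (cut i) (cut ((i : ℕ) + 1))) :
    IsAlloc X ∧
    (∀ Y : Fin n → Set ℝ, IsAlloc Y →
      (∑ i, pieceVal (v i) (Y i)) ≤ ∑ i, pieceVal (v i) (X i)) ∧
    ParetoOpt v X := by
  have hHall : ∀ i, v i (p i) = Real.sqrt k ∧ p i ∈ Set.Icc (0:ℝ) 1 :=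
    fun i => height (v i) (p i) k hk (hsp i) (hsupp i) (hnorm i)
  have hp0 : ∀ i, 0 ≤ p i := fun i => (hHall i).2.1
  have hp1 : ∀ i, p i ≤ 1 := fun i => (hHall i).2.2
  have hpmono : Monotone p := hsorted.monotone
  have hcutle : ∀ m, m < n → cut m ≤ cut (m + 1) := by
    intro m hm
    rcases Nat.eq_zero_or_pos m with hm0 | hm1
    · subst hm0
      rw [hcut0]
      rcases Nat.lt_or_ge 1 n with h1n | h1n
      · rw [hcutmid 1 one_pos h1n]
        have h1 := hp0 ⟨0, by omega⟩
        have h2 := hp0 ⟨1, h1n⟩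
        linarith
      · have hone : n = 1 := by omega
        subst hone
        rw [hcutn]; norm_num
    · rcases Nat.lt_or_ge (m+1) n with h2 | h2
      · rw [hcutmid m hm1 hm, hcutmid (m+1) (by omega) h2]
        simp only [Nat.add_sub_cancel]
        have e1 : p ⟨m - 1, by omega⟩ ≤ p ⟨m, by omega⟩ :=
          hpmono (Fin.mk_le_mk.2 (by omega))
        have e2 : p ⟨m, by omega⟩ ≤ p ⟨m + 1, h2⟩ :=
          hpmono (Fin.mk_le_mk.2 (by omega))
        linarith
      · have hmn : m + 1 = n := by omega
        rw [hmn, hcutn, hcutmid m hm1 hm]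
        have e1 := hp1 ⟨m - 1, by omega⟩
        have e2 := hp1 ⟨m, hm⟩
        linarith
  have hcutmono : ∀ a b : ℕ, a ≤ b → b ≤ n → cut a ≤ cut b := by
    intro a b hab hbn
    induction b, hab using Nat.le_induction with
    | base => exact le_rfl
    | succ b hb ih => exact le_trans (ih (by omega)) (hcutle b (by omega))
  have hc0 : ∀ m, m ≤ n → 0 ≤ cut m := fun m h =>
    hcut0 ▸ hcutmono 0 m (Nat.zero_le m) h
  have hc1 : ∀ m, m ≤ n → cut m ≤ 1 := fun m h =>
    hcutn ▸ hcutmono m n h le_rfl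
  have hXup : ∀ (i : Fin n) (x : ℝ), x ∈ X i → x ≤ cut ((i:ℕ)+1) := by
    intro i x hx
    rw [hXdef i] at hx
    split_ifs at hx with h
    · rw [h]; exact hx.2
    · exact hx.2
  have hXlow : ∀ (i : Fin n) (x : ℝ), x ∈ X i → ((i:ℕ) = 0 ∧ 0 ≤ x) ∨ cut (i:ℕ) < x := by
    intro i x hx
    rw [hXdef i] at hx
    split_ifs at hx with h
    · exact Or.inl ⟨h, by rw [← hcut0]; exact hx.1⟩
    · exact Or.inr hx.1
  have hXsub : ∀ i, X i ⊆ Set.Icc (0:ℝ) 1 := by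
    intro i x hx
    constructor
    · rcases hXlow i x hx with ⟨_, h⟩ | h
      · exact h
      · exact le_trans (hc0 (i:ℕ) (le_of_lt i.isLt)) h.le
    · exact le_trans (hXup i x hx) (hc1 ((i:ℕ)+1) i.isLt)
  have hXm : ∀ i, MeasurableSet (X i) := by
    intro i; rw [hXdef i]; split_ifs
    exacts [measurableSet_Icc, measurableSet_Ioc]
  have hXd : ∀ i j, i ≠ j → X i ∩ X j = ∅ := by
    suffices hlt : ∀ i j : Fin n, i < j → X i ∩ X j = ∅ by
      intro i j hij
      rcases hij.lt_or_gt with h | h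
      · exact hlt i j h
      · rw [Set.inter_comm]; exact hlt j i h
    intro i j hij
    rw [Set.eq_empty_iff_forall_notMem]
    rintro x ⟨hxi, hxj⟩
    have h1 : x ≤ cut ((i:ℕ)+1) := hXup i x hxi
    have h2 : cut (j:ℕ) < x := by
      rcases hXlow j x hxj with ⟨hj0, _⟩ | h
      · exfalso; have := Fin.lt_def.1 hij; omega
      · exact h
    have h3 : cut ((i:ℕ)+1) ≤ cut (j:ℕ) :=
      hcutmono _ _ (by have := Fin.lt_def.1 hij; omega) (le_of_lt j.isLt)
    linarith
  have hXu : (⋃ i, X i) = Set.Icc (0:ℝ) 1 := by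
    apply Set.Subset.antisymm
    · exact Set.iUnion_subset hXsub
    · intro x hx
      have key : ∀ m, m ≤ n → x ≤ cut m → ∃ i : Fin n, x ∈ X i := by
        intro m
        induction m with
        | zero =>
          intro _ hxm
          refine ⟨⟨0, hn⟩, ?_⟩
          rw [hXdef, if_pos rfl, hcut0]
          rw [hcut0] at hxm
          exact ⟨hx.1, le_trans hxm (hc0 1 hn)⟩
        | succ m ih =>
          intro hm1 hxm
          by_cases hxm' : x ≤ cut m
          · exact ih (by omega) hxm'
          push_neg at hxm'
          rcases Nat.eq_zero_or_pos m with h0 | hpos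
          · subst h0
            refine ⟨⟨0, hn⟩, ?_⟩
            rw [hXdef, if_pos rfl, hcut0]
            exact ⟨hx.1, hxm⟩
          · refine ⟨⟨m, by omega⟩, ?_⟩
            rw [hXdef]
            rw [if_neg (by simp only [Fin.val_mk]; omega)]
            simp only [Fin.val_mk]
            exact ⟨hxm', hxm⟩
      obtain ⟨i, hi⟩ := key n le_rfl (by rw [hcutn]; exact hx.2)
      exact Set.mem_iUnion.2 ⟨i, hi⟩
  have hkey : ∀ (i : Fin n) (x : ℝ), x ∈ X i → ∀ j, v j x ≤ v i x := by
    intro i x hx j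
    rcases eq_or_ne j i with rfl | hji
    · exact le_rfl
    have habs : |x - p i| ≤ |x - p j| := by
      rcases lt_or_gt_of_ne hji with hlt | hgt
      · have hilt := Fin.lt_def.1 hlt
        have hi0 : (i:ℕ) ≠ 0 := by omega
        have hxl : cut (i:ℕ) < x := by
          rcases hXlow i x hx with ⟨h, _⟩ | h
          · exact absurd h hi0
          · exact h
        rw [hcutmid (i:ℕ) (Nat.pos_of_ne_zero hi0) i.isLt] at hxl
        have hpj : p j ≤ p ⟨(i:ℕ)-1, by omega⟩ :=
          hpmono (by rw [Fin.le_def]; simp only [Fin.val_mk]; omega)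
        have hpi : p ⟨(i:ℕ), i.isLt⟩ = p i := rfl
        rw [hpi] at hxl
        have hpji : p j < p i := hsorted hlt
        have hmid : (p j + p i)/2 < x := by linarith
        calc |x - p i| ≤ x - p j := abs_le.2 ⟨by linarith, by linarith⟩
          _ ≤ |x - p j| := le_abs_self _
      · have higt := Fin.lt_def.1 hgt
        have hxu : x ≤ cut ((i:ℕ)+1) := hXup i x hx
        have hin : (i:ℕ)+1 < n := lt_of_le_of_lt higt j.isLt
        rw [hcutmid ((i:ℕ)+1) (by omega) hin] at hxu
        simp only [Nat.add_sub_cancel] at hxu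
        have hpi : p ⟨(i:ℕ), by omega⟩ = p i := rfl
        rw [hpi] at hxu
        have hpj : p ⟨(i:ℕ)+1, hin⟩ ≤ p j :=
          hpmono (by rw [Fin.le_def]; simp only [Fin.val_mk]; omega)
        have hpji : p i < p j := hsorted hgt
        have hmid : x ≤ (p i + p j)/2 := by linarith
        calc |x - p i| ≤ p j - x := abs_le.2 ⟨by linarith, by linarith⟩
          _ ≤ |x - p j| := by rw [abs_sub_comm]; exact le_abs_self _
    rw [hsp i x, hsp j x, (hHall i).1, (hHall j).1]
    exact max_le_max le_rfl
      (sub_le_sub_left (mul_le_mul_of_nonneg_left habs hk.le) _)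
  have hvc : ∀ i, Continuous (v i) := fun i =>
    triCont (v i) (v i (p i)) (p i) k (hsp i)
  have hvint : ∀ i, IntegrableOn (v i) (Set.Icc (0:ℝ) 1) := fun i =>
    (hvc i).integrableOn_Icc
  have halloc : IsAlloc X := ⟨hXm, hXd, hXu⟩
  have hmain : ∀ Y, IsAlloc Y →
      (∑ i, pieceVal (v i) (Y i)) ≤ ∑ i, pieceVal (v i) (X i) := by
    rintro Y ⟨hYm, hYd, hYu⟩
    have hYsub : ∀ i, Y i ⊆ Set.Icc (0:ℝ) 1 := fun i => hYu ▸ Set.subset_iUnion Y i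
    simp only [pieceVal]
    calc (∑ i, ∫ x in Y i, v i x)
        = ∑ i, ∑ j, ∫ x in Y i ∩ X j, v i x :=
          Finset.sum_congr rfl fun i _ =>
            splitInt (v i) (hvc i) X hXm hXd hXu (Y i) (hYm i) (hYsub i)
      _ ≤ ∑ i, ∑ j, ∫ x in Y i ∩ X j, v j x := by
          apply Finset.sum_le_sum; intro i _
          apply Finset.sum_le_sum; intro j _
          apply MeasureTheory.setIntegral_mono_on
          · exact (hvint i).mono_set
              (le_trans Set.inter_subset_left (hYsub i))
          · exact (hvint j).mono_set
              (le_trans Set.inter_subset_left (hYsub i))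
          · exact (hYm i).inter (hXm j)
          · intro x hx; exact hkey j x hx.2 i
      _ = ∑ j, ∑ i, ∫ x in X j ∩ Y i, v j x := by
          rw [Finset.sum_comm]
          exact Finset.sum_congr rfl fun j _ => Finset.sum_congr rfl fun i _ => by
            rw [Set.inter_comm]
      _ = ∑ j, ∫ x in X j, v j x :=
          Finset.sum_congr rfl fun j _ =>
            (splitInt (v j) (hvc j) Y hYm hYd hYu (X j) (hXm j) (hXsub j)).symm
  refine ⟨halloc, hmain, ?_⟩
  rintro ⟨Y, hY, hdom⟩
  have h1 := hmain Y hY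
  have h2 : (∑ i, pieceVal (v i) (X i)) < ∑ i, pieceVal (v i) (Y i) := by
    obtain ⟨i0, hi0⟩ := hdom.2
    exact Finset.sum_lt_sum (fun i _ => hdom.1 i) ⟨i0, Finset.mem_univ i0, hi0⟩
  linarith
end

section
/- Suppose [0,1] is partitioned into finitely many intervals I_1,…,I_q such that every agent's density v_i is affine on each I_t. For each t let N_t = {i : ∫_{I_t} v_i > 0} be the set of interested agents, with |N_t| = n_t and the agents of N_t enumerated in some order. Construct the allocation in which each I_t is divided into 2·n_t equal-length pieces, and the j-th agted of N_t receives the j-th and the (2·n_t + 1 − j)-th pieces of I_t (agents not in N_t receive nothing from I_t, and leftover pieces of intervals with N_t = ∅ are assigned arbitrarily). Then the resulting allocation is envy-free: V_i(X_i) ≥ V_i(X_j) for all agents i, j. Moreover each agent i obtains V_i(X_i) = Σ_{t : i ∈ N_t} (1/n_t)·∫_{I_t} v_i. -/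
open MeasureTheory

lemma affine_int (α β p r : ℝ) (h : p ≤ r) :
    ∫ x in Set.Ioc p r, (α * x + β) = α * ((r^2 - p^2)/2) + β * (r - p) := by
  rw [← intervalIntegral.integral_of_le h]
  have h1 : IntervalIntegrable (fun x => α * x) volume p r :=
    (continuous_const.mul continuous_id).intervalIntegrable _ _
  have h2 : IntervalIntegrable (fun _ : ℝ => β) volume p r :=
    intervalIntegrable_const
  rw [intervalIntegral.integral_add h1 h2, intervalIntegral.integral_const_mul,
    integral_id, intervalIntegral.integral_const, smul_eq_mul]
  ring

noncomputable def pairSet (a b : ℝ) (m j : ℕ) : Set ℝ :=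
  Set.Ioc (a + ((j:ℝ) - 1) * (b - a) / (2 * m)) (a + (j:ℝ) * (b - a) / (2 * m)) ∪
  Set.Ioc (a + (2*(m:ℝ) - j) * (b - a) / (2 * m)) (a + (2*(m:ℝ) + 1 - j) * (b - a) / (2 * m))

lemma pairSet_measurable (a b : ℝ) (m j : ℕ) : MeasurableSet (pairSet a b m j) :=
  measurableSet_Ioc.union measurableSet_Ioc

lemma pair_subset (a b : ℝ) (hab : a ≤ b) (m j : ℕ) (h1 : 1 ≤ j) (hjm : j ≤ m) :
    pairSet a b m j ⊆ Set.Ioc a b := by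
  rw [pairSet]
  have hm0 : (0:ℝ) < m := by exact_mod_cast Nat.lt_of_lt_of_le (by omega) hjm
  have hj1 : (1:ℝ) ≤ j := by exact_mod_cast h1
  have hjm' : (j:ℝ) ≤ m := by exact_mod_cast hjm
  have hu : 0 ≤ (b - a) / (2 * m) := div_nonneg (by linarith) (by positivity)
  have key : ∀ c : ℝ, 0 ≤ c → c ≤ 2 * m → a + c * (b - a) / (2 * m) ∈ Set.Icc a b := by
    intro c hc0 hc2
    constructor
    · have : 0 ≤ c * (b - a) / (2 * m) := div_nonneg (mul_nonneg hc0 (by linarith)) (by positivity)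
      linarith
    · rw [mul_div_assoc]
      have h1 : c * ((b - a) / (2 * m)) ≤ 2 * m * ((b - a) / (2 * m)) :=
        mul_le_mul_of_nonneg_right hc2 hu
      have h2 : 2 * (m:ℝ) * ((b - a) / (2 * m)) = b - a := by field_simp
      linarith
  apply Set.union_subset
  · apply Set.Ioc_subset_Ioc
    · exact (key _ (by linarith) (by linarith)).1
    · exact (key _ (by linarith) (by linarith)).2
  · apply Set.Ioc_subset_Ioc
    · exact (key _ (by linarith) (by linarith)).1
    · exact (key _ (by linarith) (by linarith)).2

lemma pair_value (f : ℝ → ℝ) (a b α β : ℝ) (hab : a ≤ b)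
    (hf : ∀ x ∈ Set.Ioc a b, f x = α * x + β)
    (hfi : IntegrableOn f (Set.Ioc a b))
    (m j : ℕ) (h1 : 1 ≤ j) (hjm : j ≤ m) :
    (∫ x in pairSet a b m j, f x) = (1/(m:ℝ)) * ∫ x in Set.Ioc a b, f x := by
  have hm0 : (0:ℝ) < m := by exact_mod_cast Nat.lt_of_lt_of_le (by omega) hjm
  have hj1 : (1:ℝ) ≤ j := by exact_mod_cast h1
  have hjm' : (j:ℝ) ≤ m := by exact_mod_cast hjm
  have hu : 0 ≤ (b - a) / (2 * m) := div_nonneg (by linarith) (by positivity)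
  have horder : ∀ c c' : ℝ, c ≤ c' → a + c * (b - a) / (2 * m) ≤ a + c' * (b - a) / (2 * m) := by
    intro c c' h
    rw [mul_div_assoc, mul_div_assoc]
    nlinarith [mul_le_mul_of_nonneg_right h hu]
  have h12 : a + ((j:ℝ) - 1) * (b - a) / (2 * m) ≤ a + (j:ℝ) * (b - a) / (2 * m) :=
    horder _ _ (by linarith)
  have h23 : a + (j:ℝ) * (b - a) / (2 * m) ≤ a + (2*(m:ℝ) - j) * (b - a) / (2 * m) :=
    horder _ _ (by linarith)
  have h34 : a + (2*(m:ℝ) - j) * (b - a) / (2 * m) ≤ a + (2*(m:ℝ) + 1 - j) * (b - a) / (2 * m) :=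
    horder _ _ (by linarith)
  have hsub := pair_subset a b hab m j h1 hjm
  rw [pairSet] at hsub
  have hsub1 := (Set.union_subset_iff.mp hsub).1
  have hsub2 := (Set.union_subset_iff.mp hsub).2
  have hdisj : Disjoint
      (Set.Ioc (a + ((j:ℝ) - 1) * (b - a) / (2 * m)) (a + (j:ℝ) * (b - a) / (2 * m)))
      (Set.Ioc (a + (2*(m:ℝ) - j) * (b - a) / (2 * m)) (a + (2*(m:ℝ) + 1 - j) * (b - a) / (2 * m))) := by
    rw [Set.disjoint_left]
    intro x hx hx'
    have := hx.2
    have := hx'.1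
    linarith
  rw [pairSet]
  rw [setIntegral_union hdisj measurableSet_Ioc (hfi.mono_set hsub1) (hfi.mono_set hsub2)]
  rw [setIntegral_congr_fun measurableSet_Ioc (fun x hx => hf x (hsub1 hx)),
    setIntegral_congr_fun measurableSet_Ioc (fun x hx => hf x (hsub2 hx)),
    setIntegral_congr_fun measurableSet_Ioc (fun x hx => hf x hx),
    affine_int _ _ _ _ h12, affine_int _ _ _ _ h34, affine_int _ _ _ _ hab]
  have hm' : (m:ℝ) ≠ 0 := ne_of_gt hm0
  field_simp
  ring

/-- Modified Wang-Wu: if [0,1] is cut into intervals on which every density is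
affine, and each interval is split into 2·n_t equal pieces shared symmetrically
among the interested agents N_t, then the resulting allocation is envy-free and
each agent i gets exactly Σ_{t : i ∈ N_t} (1/n_t)·∫_{I_t} v_i. -/
theorem statement13 {n q : ℕ} (hn : 0 < n) (hq : 0 < q)
    (v : Fin n → ℝ → ℝ)
    (hmeas : ∀ i, Measurable (v i))
    (hint : ∀ i, IntegrableOn (v i) (Set.Icc (0:ℝ) 1))
    (hnonneg : ∀ i x, 0 ≤ v i x)
    (hnorm : ∀ i, (∫ x in Set.Icc (0:ℝ) 1, v i x) = 1)
    (d : Fin (q + 1) → ℝ) (hd : Monotone d) (hd0 : d 0 = 0) (hd1 : d (Fin.last q) = 1)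
    (haff : ∀ (i : Fin n) (t : Fin q), ∃ α β : ℝ,
      ∀ x ∈ Set.Ioc (d t.castSucc) (d t.succ), v i x = α * x + β)
    (N : Fin q → Finset (Fin n))
    (hN : ∀ t i, i ∈ N t ↔ 0 < ∫ x in Set.Ioc (d t.castSucc) (d t.succ), v i x)
    (rk : Fin q → Fin n → ℕ)
    (hrk : ∀ t, Set.BijOn (rk t) (↑(N t) : Set (Fin n)) (Set.Icc 1 (N t).card))
    (X : Fin n → Set ℝ)
    (hX : ∀ i, X i = ⋃ (t : Fin q) (_ : i ∈ N t),
      (Set.Ioc (d t.castSucc + ((rk t i : ℝ) - 1) * (d t.succ - d t.castSucc) / (2 * (N t).card))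
               (d t.castSucc + (rk t i : ℝ) * (d t.succ - d t.castSucc) / (2 * (N t).card)) ∪
       Set.Ioc (d t.castSucc + (2 * ((N t).card : ℝ) - rk t i) * (d t.succ - d t.castSucc) / (2 * (N t).card))
               (d t.castSucc + (2 * ((N t).card : ℝ) + 1 - rk t i) * (d t.succ - d t.castSucc) / (2 * (N t).card)))) :
    EnvyFreeA v X ∧
    (∀ i, pieceVal (v i) (X i) = ∑ t : Fin q,
      if i ∈ N t then (1 / ((N t).card : ℝ)) * ∫ x in Set.Ioc (d t.castSucc) (d t.succ), v i x
      else 0) := by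
  classical
  have hab : ∀ t : Fin q, d t.castSucc ≤ d t.succ := fun t => hd (Fin.castSucc_le_succ t)
  have hd01 : ∀ t : Fin q, Set.Ioc (d t.castSucc) (d t.succ) ⊆ Set.Icc (0:ℝ) 1 := by
    intro t
    have h0 : (0:ℝ) ≤ d t.castSucc := hd0 ▸ hd (Fin.zero_le _)
    have h1 : d t.succ ≤ 1 := hd1 ▸ hd (Fin.le_last _)
    exact Set.Ioc_subset_Icc_self.trans (Set.Icc_subset_Icc h0 h1)
  have hIdisj : ∀ t t' : Fin q, t ≠ t' →
      Disjoint (Set.Ioc (d t.castSucc) (d t.succ)) (Set.Ioc (d t'.castSucc) (d t'.succ)) := by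
    have hle : ∀ t t' : Fin q, t < t' → d t.succ ≤ d t'.castSucc := by
      intro t t' h
      apply hd
      simp only [Fin.le_def, Fin.val_succ, Fin.coe_castSucc]
      exact h
    intro t t' h
    have base : ∀ t t' : Fin q, t < t' →
        Disjoint (Set.Ioc (d t.castSucc) (d t.succ)) (Set.Ioc (d t'.castSucc) (d t'.succ)) := by
      intro s s' hs
      rw [Set.disjoint_left]
      intro x hx hx'
      have := hle s s' hs
      have := hx.2
      have := hx'.1
      linarith
    rcases lt_or_gt_of_ne h with h' | h'
    · exact base t t' h'
    · exact (base t' t h').symm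
  have hXS : ∀ k, X k = ⋃ t, (if k ∈ N t then
      pairSet (d t.castSucc) (d t.succ) ((N t).card) (rk t k) else ∅) := by
    intro k
    rw [hX k]
    exact Set.iUnion_congr fun t => Set.iUnion_eq_if _
  have hSsub : ∀ t (k : Fin n), (if k ∈ N t then
      pairSet (d t.castSucc) (d t.succ) ((N t).card) (rk t k) else ∅)
      ⊆ Set.Ioc (d t.castSucc) (d t.succ) := by
    intro t k
    split
    · next hk =>
      have hmem := (hrk t).mapsTo hk
      exact pair_subset _ _ (hab t) _ _ hmem.1 hmem.2
    · exact Set.empty_subset _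
  have key : ∀ i k : Fin n, pieceVal (v i) (X k) = ∑ t : Fin q,
      if k ∈ N t then (1 / ((N t).card : ℝ)) * ∫ x in Set.Ioc (d t.castSucc) (d t.succ), v i x
      else 0 := by
    intro i k
    show (∫ x in X k, v i x) = _
    rw [hXS k]
    rw [integral_iUnion_fintype
      (fun t => by split; exacts [pairSet_measurable _ _ _ _, MeasurableSet.empty])
      (fun t t' htt' => Set.disjoint_of_subset (hSsub t k) (hSsub t' k) (hIdisj t t' htt'))
      (fun t => (hint i).mono_set ((hSsub t k).trans (hd01 t)))]
    refine Finset.sum_congr rfl fun t _ => ?_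
    by_cases hk : k ∈ N t
    · rw [if_pos hk, if_pos hk]
      obtain ⟨α, β, hαβ⟩ := haff i t
      have hmem := (hrk t).mapsTo hk
      exact pair_value (v i) _ _ α β (hab t) hαβ ((hint i).mono_set (hd01 t)) _ _ hmem.1 hmem.2
    · rw [if_neg hk, if_neg hk]
      simp
  refine ⟨?_, fun i => key i i⟩
  intro i j
  rw [key i i, key i j]
  apply Finset.sum_le_sum
  intro t _
  have hnn : 0 ≤ ∫ x in Set.Ioc (d t.castSucc) (d t.succ), v i x :=
    setIntegral_nonneg measurableSet_Ioc fun x _ => hnonneg i x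
  by_cases hi : i ∈ N t
  · rw [if_pos hi]
    split
    · exact le_refl _
    · positivity
  · rw [if_neg hi]
    have hz : (∫ x in Set.Ioc (d t.castSucc) (d t.succ), v i x) = 0 :=
      le_antisymm (not_lt.mp ((hN t i).not.mp hi)) hnn
    split
    · rw [hz, mul_zero]
    · exact le_refl _
end
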